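/- Let R be a Noetherian ring of prime characteristic p, M an R-module, I = (x_1, …, x_k) an ideal of R, z ∈ I* an element of the tight closure of I, and m ∈ M an element with x_i m ∈ 0*_M for all i = 1, …, k. Then z m ∈ 0*_M. Equivalently, for every ideal I, (0*_M :_M I*) = (0*_M :_M I). -/

import Mathlib

open scoped TensorProduct Pointwise

universe u v w

section TightClosureDefs

variable (R : Type u) [CommRing R] (p : ℕ)

/-- `R^o`: the complement of the union of the minimal primes of `R`. -/
def Ro : Set R := {c | ∀ P ∈ minimalPrimes R, c ∉ P}

/-- The Frobenius power `I^{[q]}` of an ideal: the ideal generated by the `q`-th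
powers of the elements of `I`. -/
def frobeniusPower (I : Ideal R) (q : ℕ) : Ideal R :=
  Ideal.span ((fun x => x ^ q) '' (I : Set R))

/-- The tight closure `I*` of an ideal `I`: all `x` such that `c x^q ∈ I^{[q]}` for some
`c ∈ R^o` and all `q = p^e ≫ 0`. -/
def idealTC (I : Ideal R) : Set R :=
  {x | ∃ c ∈ Ro R, ∃ e₀ : ℕ, ∀ e ≥ e₀, c * x ^ p ^ e ∈ frobeniusPower R I (p ^ e)}

/-- `R^e`: `R` viewed as an `R`-algebra via the `e`-th iterated Frobenius `r ↦ r^{p^e}`. -/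
def FrobAlg (R : Type u) [CommRing R] (_p _e : ℕ) : Type u := R

instance FrobAlg.instCommRing (e : ℕ) : CommRing (FrobAlg R p e) := inferInstanceAs (CommRing R)

noncomputable instance FrobAlg.instAlgebra (e : ℕ) [ExpChar R p] : Algebra R (FrobAlg R p e) :=
  (iterateFrobenius R p e).toAlgebra

/-- The identity map of `R` into `FrobAlg R p e`. -/
def FrobAlg.mk (e : ℕ) : R → FrobAlg R p e := id

variable [ExpChar R p]

/-- `N^{[p^e]}_M`: the image of `F^e(N) → F^e(M)`, where `F^e(M) = R^e ⊗_R M` is the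
`e`-th Frobenius functor. -/
noncomputable def submoduleFrobPow {M : Type v} [AddCommGroup M] [Module R M]
    (N : Submodule R M) (e : ℕ) : Submodule R (FrobAlg R p e ⊗[R] M) :=
  LinearMap.range (LinearMap.lTensor (FrobAlg R p e) N.subtype)

/-- The tight closure `N*_M` of a submodule `N ⊆ M`: all `m` such that
`c ⊗ m ∈ N^{[q]}_M` for some `c ∈ R^o` and all `q = p^e ≫ 0`. -/
noncomputable def moduleTC {M : Type v} [AddCommGroup M] [Module R M]
    (N : Submodule R M) : Set M :=
  {m | ∃ c ∈ Ro R, ∃ e₀ : ℕ, ∀ e ≥ e₀,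
    (FrobAlg.mk R p e c) ⊗ₜ[R] m ∈ submoduleFrobPow R p N e}

/-- The finitistic tight closure `N*fg_M`: the union of `(N ∩ M')*_{M'}` over all
finitely generated submodules `M' ⊆ M`. -/
noncomputable def finitisticTC {M : Type v} [AddCommGroup M] [Module R M]
    (N : Submodule R M) : Set M :=
  ⋃ (M' : Submodule R M) (_ : M'.FG),
    (M'.subtype '' moduleTC R p (N.comap M'.subtype))

/-- A test element: `c ∈ R^o` such that `c I* ⊆ I` for every ideal `I`. -/
def IsTestElement (c : R) : Prop :=
  c ∈ Ro R ∧ ∀ I : Ideal R, ∀ x ∈ idealTC R p I, c * x ∈ I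

/-- A module test element: `c ∈ R^o` such that for every finitely generated module `M`,
every submodule `N ⊆ M`, every `x ∈ N*_M` and every `q = p^e`, `c ⊗ x ∈ N^{[q]}_M`. -/
def IsModuleTestElement (c : R) : Prop :=
  c ∈ Ro R ∧ ∀ (M : Type u) [AddCommGroup M] [Module R M], Module.Finite R M →
    ∀ (N : Submodule R M), ∀ x ∈ moduleTC R p N, ∀ e : ℕ,
      (FrobAlg.mk R p e c) ⊗ₜ[R] x ∈ submoduleFrobPow R p N e

/-- The annihilator, inside the Matlis-type dual `Hom_R(M, E)`, of a subset `S ⊆ M`. -/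
def annihilatorIn {M : Type v} {E : Type w} [AddCommGroup M] [Module R M]
    [AddCommGroup E] [Module R E] (S : Set M) : Submodule R (M →ₗ[R] E) where
  carrier := {f | ∀ x ∈ S, f x = 0}
  add_mem' := by intro f g hf hg x hx; simp [hf x hx, hg x hx]
  zero_mem' := by intro x hx; simp
  smul_mem' := by intro r f hf x hx; simp [hf x hx]

/-- The product `s · T` of a set of ring elements and a submodule: the submodule
generated by all products `a • t` with `a ∈ s`, `t ∈ T`. -/
def setSMulSubmodule {M : Type v} [AddCommGroup M] [Module R M]
    (s : Set R) (T : Submodule R M) : Submodule R M :=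
  Submodule.span R (s • (T : Set M))

/-- `E` is an injective hull of `M` over `R`: `E` is an injective module admitting an
essential embedding of `M`. -/
def IsInjectiveHull (M : Type v) (E : Type w) [AddCommGroup M] [Module R M]
    [AddCommGroup E] [Module R E] : Prop :=
  Module.Injective R E ∧ ∃ ι : M →ₗ[R] E, Function.Injective ι ∧
    ∀ N : Submodule R E, N ≠ ⊥ → N ⊓ LinearMap.range ι ≠ ⊥

/-- The test ideal `τ(R) = ⋂_M Ann_R (0*_M)`, where `M` runs through all finitely
generated `R`-modules. -/
noncomputable def testIdeal : Ideal R where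
  carrier := {c | ∀ (M : Type u) [AddCommGroup M] [Module R M], Module.Finite R M →
    ∀ x ∈ moduleTC R p (⊥ : Submodule R M), c • x = 0}
  add_mem' := by
    intro a b ha hb M _ _ hfin x hx
    rw [add_smul, ha M hfin x hx, hb M hfin x hx, add_zero]
  zero_mem' := by intro M _ _ hfin x hx; rw [zero_smul]
  smul_mem' := by
    intro r a ha M _ _ hfin x hx
    rw [smul_eq_mul, mul_smul, ha M hfin x hx, smul_zero]

/-- An `F`-finite ring: `R` is finitely generated as a module over its subring of
`p`-th powers, i.e. `R^1` is a finite `R`-module. -/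
def IsFFinite : Prop := Module.Finite R (FrobAlg R p 1)

/-- An ideal generated by a system of parameters: generated by `dim R` elements and
with radical the maximal ideal (i.e. primary to the maximal ideal). -/
def IsParameterIdeal [IsLocalRing R] (I : Ideal R) : Prop :=
  ∃ (n : ℕ) (x : Fin n → R), ringKrullDim R = n ∧ I = Ideal.span (Set.range x) ∧
    I.radical = IsLocalRing.maximalIdeal R

/-- The parameter test ideal `τ_par(R) = ⋂_I (I : I*)`, where `I` runs through the
ideals generated by systems of parameters. -/
def parameterTestIdeal [IsLocalRing R] : Ideal R where
  carrier := {c | ∀ I : Ideal R, IsParameterIdeal R I → ∀ z ∈ idealTC R p I, c * z ∈ I}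
  add_mem' := by
    intro a b ha hb I hI z hz
    rw [add_mul]; exact I.add_mem (ha I hI z hz) (hb I hI z hz)
  zero_mem' := by intro I hI z hz; rw [zero_mul]; exact I.zero_mem
  smul_mem' := by
    intro r a ha I hI z hz
    rw [smul_eq_mul, mul_assoc]; exact I.mul_mem_left r (ha I hI z hz)

/-- A parameter test element: an element of `τ_par(R) ∩ R^o`. -/
def IsParameterTestElement [IsLocalRing R] (c : R) : Prop :=
  c ∈ parameterTestIdeal R p ∧ c ∈ Ro R

end TightClosureDefs

/-- A Cohen–Macaulay local ring: a local ring admitting a system of parameters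
(`dim R` elements generating an ideal whose radical is the maximal ideal, here expressed
as the Jacobson radical `(⊥).jacobson`) that is a regular sequence. -/
def IsCohenMacaulayLocalRing (R : Type u) [CommRing R] : Prop :=
  IsLocalRing R ∧ ∃ (n : ℕ) (x : Fin n → R), ringKrullDim R = n ∧
    (Ideal.span (Set.range x)).radical = (⊥ : Ideal R).jacobson ∧
    RingTheory.Sequence.IsRegular R (List.ofFn x)


section Helpers

variable (R : Type u) [CommRing R] (p : ℕ)

lemma one_mem_Ro : (1 : R) ∈ Ro R :=
  fun P hP h1 => hP.1.1.ne_top ((Ideal.eq_top_iff_one P).2 h1)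

lemma mul_mem_Ro {a b : R} (ha : a ∈ Ro R) (hb : b ∈ Ro R) : a * b ∈ Ro R :=
  fun P hP hmem => (hP.1.1.mem_or_mem hmem).elim (ha P hP) (hb P hP)

lemma prod_mem_Ro {ι : Type*} (s : Finset ι) (f : ι → R) (h : ∀ i ∈ s, f i ∈ Ro R) :
    ∏ i ∈ s, f i ∈ Ro R := by
  classical
  induction s using Finset.induction with
  | empty => simpa using one_mem_Ro R
  | insert _ _ hni ih =>
    rw [Finset.prod_insert hni]
    exact mul_mem_Ro R (h _ (Finset.mem_insert_self _ _))
      (ih fun i hi => h i (Finset.mem_insert_of_mem hi))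

variable [ExpChar R p] {M : Type v} [AddCommGroup M] [Module R M]

lemma frobPow_bot (e : ℕ) : submoduleFrobPow R p (⊥ : Submodule R M) e = ⊥ := by
  have h : (⊥ : Submodule R M).subtype = 0 := by
    ext x
    exact (Submodule.mem_bot R).1 x.2
  unfold submoduleFrobPow
  rw [h, LinearMap.lTensor_zero, LinearMap.range_zero]

lemma tmul_smul_eq (e : ℕ) (c r : R) (m : M) :
    (FrobAlg.mk R p e c) ⊗ₜ[R] (r • m) =
      (FrobAlg.mk R p e (c * r ^ p ^ e)) ⊗ₜ[R] m := by
  rw [TensorProduct.tmul_smul, TensorProduct.smul_tmul']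
  congr 1
  show r • (FrobAlg.mk R p e c) = FrobAlg.mk R p e (c * r ^ p ^ e)
  rw [Algebra.smul_def]
  show (iterateFrobenius R p e r) * c = c * r ^ p ^ e
  rw [iterateFrobenius_def, mul_comm]

lemma mul_tmul_zero (e : ℕ) (a c : R) (m : M)
    (h : (FrobAlg.mk R p e c) ⊗ₜ[R] m = 0) :
    (FrobAlg.mk R p e (a * c)) ⊗ₜ[R] m = 0 := by
  have := congrArg (LinearMap.rTensor M (LinearMap.mulLeft R (FrobAlg.mk R p e a))) h
  have h2 : (FrobAlg.mk R p e a * FrobAlg.mk R p e c) ⊗ₜ[R] m = 0 := by simpa using this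
  exact h2

lemma mem_TC_bot_iff (m : M) :
    m ∈ moduleTC R p (⊥ : Submodule R M) ↔
      ∃ c ∈ Ro R, ∃ e₀ : ℕ, ∀ e ≥ e₀,
        (FrobAlg.mk R p e c) ⊗ₜ[R] m = 0 := by
  unfold moduleTC
  simp only [frobPow_bot, Submodule.mem_bot, Set.mem_setOf_eq]

end Helpers

section MainLemma

variable (R : Type u) [CommRing R] (p : ℕ) [Fact p.Prime] [CharP R p]
variable {M : Type v} [AddCommGroup M] [Module R M]

lemma tc_main (k : ℕ) (x : Fin k → R) (z : R) (m : M)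
    (hz : z ∈ idealTC R p (Ideal.span (Set.range x)))
    (hx : ∀ i : Fin k, x i • m ∈ moduleTC R p (⊥ : Submodule R M)) :
    z • m ∈ moduleTC R p (⊥ : Submodule R M) := by
  haveI : ExpChar R p := .prime Fact.out
  obtain ⟨c0, hc0, e0, h0⟩ := hz
  simp only [mem_TC_bot_iff] at hx ⊢
  choose c hc e1 h1 using hx
  classical
  refine ⟨c0 * ∏ i, c i, mul_mem_Ro R hc0 (prod_mem_Ro R _ _ fun i _ => hc i),
    max e0 (Finset.univ.sup e1), fun e he => ?_⟩
  set q := p ^ e with hq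
  set d := ∏ i, c i with hd
  -- key claim
  have key : ∀ r ∈ frobeniusPower R (Ideal.span (Set.range x)) q,
      (FrobAlg.mk R p e (d * r)) ⊗ₜ[R] m = 0 := by
    intro r hr
    induction hr using Submodule.span_induction with
    | mem y hy =>
      obtain ⟨w, hwI, rfl⟩ := hy
      obtain ⟨b, rfl⟩ := (Submodule.mem_span_range_iff_exists_fun R).1 hwI
      show (FrobAlg.mk R p e (d * (∑ i, b i • x i) ^ q)) ⊗ₜ[R] m = 0
      rw [sum_pow_char_pow, Finset.mul_sum]
      have : (FrobAlg.mk R p e (∑ i, d * (b i • x i) ^ q)) ⊗ₜ[R] m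
          = ∑ i, (FrobAlg.mk R p e (d * (b i • x i) ^ q)) ⊗ₜ[R] m := by
        exact TensorProduct.sum_tmul Finset.univ
          (fun i => FrobAlg.mk R p e (d * (b i • x i) ^ q)) m
      rw [this]
      refine Finset.sum_eq_zero fun i _ => ?_
      have hzero : (FrobAlg.mk R p e (c i * x i ^ q)) ⊗ₜ[R] m = 0 := by
        rw [← tmul_smul_eq]
        exact h1 i e (le_trans (Finset.le_sup (Finset.mem_univ i)) (le_of_max_le_right he))
      have hrw : d * (b i • x i) ^ q
          = (b i ^ q * ∏ j ∈ Finset.univ.erase i, c j) * (c i * x i ^ q) := by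
        rw [smul_eq_mul, mul_pow, hd, ← Finset.mul_prod_erase _ c (Finset.mem_univ i)]
        ring
      rw [hrw]
      exact mul_tmul_zero R p e _ _ m hzero
    | zero =>
      rw [mul_zero]
      exact TensorProduct.zero_tmul _ m
    | add y y' hy hy' ih ih' =>
      have : (FrobAlg.mk R p e (d * (y + y'))) ⊗ₜ[R] m
          = (FrobAlg.mk R p e (d * y)) ⊗ₜ[R] m + (FrobAlg.mk R p e (d * y')) ⊗ₜ[R] m := by
        rw [mul_add]
        exact TensorProduct.add_tmul _ _ _
      rw [this, ih, ih', add_zero]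
    | smul a y hy ih =>
      have hrw : d * (a • y) = a * (d * y) := by
        rw [smul_eq_mul]; ring
      rw [hrw]
      exact mul_tmul_zero R p e _ _ m ih
  have hmem : c0 * z ^ q ∈ frobeniusPower R (Ideal.span (Set.range x)) q :=
    h0 e (le_of_max_le_left he)
  have := key _ hmem
  rw [tmul_smul_eq]
  calc (FrobAlg.mk R p e (c0 * d * z ^ q)) ⊗ₜ[R] m
      = (FrobAlg.mk R p e (d * (c0 * z ^ q))) ⊗ₜ[R] m := by ring_nf
    _ = 0 := this

end MainLemma

/-- Let `R` be a Noetherian ring of prime characteristic `p`, `M` an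
`R`-module, `I = (x_1, …, x_k)` an ideal, `z ∈ I*` and `m ∈ M` with `x_i m ∈ 0*_M` for
all `i`.  Then `z m ∈ 0*_M`; equivalently, `(0*_M :_M I*) = (0*_M :_M I)` for every
ideal `I`. -/
theorem colon_tight_closure_eq
    (R : Type u) [CommRing R] [IsNoetherianRing R]
    (p : ℕ) [Fact p.Prime] [CharP R p]
    (M : Type v) [AddCommGroup M] [Module R M] :
    (∀ (k : ℕ) (x : Fin k → R) (z : R) (m : M),
        z ∈ idealTC R p (Ideal.span (Set.range x)) →
        (∀ i : Fin k, x i • m ∈ moduleTC R p (⊥ : Submodule R M)) →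
        z • m ∈ moduleTC R p (⊥ : Submodule R M)) ∧
    (∀ I : Ideal R,
        {m : M | ∀ z ∈ idealTC R p I, z • m ∈ moduleTC R p (⊥ : Submodule R M)} =
        {m : M | ∀ a ∈ I, a • m ∈ moduleTC R p (⊥ : Submodule R M)}) := by
  haveI : ExpChar R p := .prime Fact.out
  constructor
  · exact fun k x z m hz hx => tc_main R p k x z m hz hx
  · intro I
    ext m
    simp only [Set.mem_setOf_eq]
    constructor
    · intro h a ha
      refine h a ⟨1, one_mem_Ro R, 0, fun e _ => ?_⟩
      rw [one_mul]
      exact Submodule.subset_span ⟨a, ha, rfl⟩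
    · intro h z hz
      obtain ⟨k, x, hspan⟩ := Submodule.fg_iff_exists_fin_generating_family.1
        ((isNoetherian_def.1 inferInstance) I)
      rw [← hspan] at hz h
      exact tc_main R p k x z m hz fun i =>
        h (x i) (Submodule.subset_span (Set.mem_range_self i))
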